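/- Let X be a real Banach space such that the set of extreme points of the closed unit ball of X* is weak*-closed. Let Y ⊆ X be a closed U-subspace of X (every nonzero functional in Y* has a unique norm-preserving extension to X), and suppose the weak*-closure of the extreme points of the unit ball of Y* is contained in the unit sphere of Y*. Then the set of extreme points of the closed unit ball of Y* is weak*-compact. -/

import Mathlib

open NormedSpace Metric Set Filter Topology

set_option maxHeartbeats 1000000
set_option synthInstance.maxHeartbeats 200000

lemma stmt17_toNormedDual_toWeakDual {E : Type*} [NormedAddCommGroup E] [NormedSpace ℝ E]
    (x : StrongDual ℝ E) : WeakDual.toStrongDual (StrongDual.toWeakDual x) = x := rfl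

section Aux

variable {X : Type*} [NormedAddCommGroup X] [NormedSpace ℝ X] (Y : Submodule ℝ X)

/-- The weak*-continuous restriction map from `X*` to `Y*`. -/
noncomputable def stmt17Restrict : WeakDual ℝ X → WeakDual ℝ Y :=
  fun g => StrongDual.toWeakDual ((WeakDual.toStrongDual g).comp Y.subtypeL)

lemma stmt17Restrict_continuous : Continuous (stmt17Restrict Y) :=
  WeakDual.continuous_of_continuous_eval fun y => WeakDual.eval_continuous (y : X)

variable {Y}

lemma stmt17_norm_le {g : StrongDual ℝ X} {f : StrongDual ℝ Y} (h : ∀ y : Y, g (y : X) = f y) :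
    ‖f‖ ≤ ‖g‖ := by
  refine ContinuousLinearMap.opNorm_le_bound _ (norm_nonneg g) fun y => ?_
  rw [← h y]
  exact g.le_opNorm _

/-- A norm-one extension of a norm-one extreme point of the ball of `Y*` is an extreme point of
the ball of `X*`, provided `Y` is a `U`-subspace. -/
lemma stmt17_ext_extreme
    (hU : ∀ y' : StrongDual ℝ Y, y' ≠ 0 →
      ∃! x' : StrongDual ℝ X, (∀ y : Y, x' (y : X) = y' y) ∧ ‖x'‖ = ‖y'‖)
    {e : StrongDual ℝ Y} (he : e ∈ Set.extremePoints ℝ (closedBall (0 : StrongDual ℝ Y) 1))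
    (hnorm : ‖e‖ = 1) {g : StrongDual ℝ X} (hg : ∀ y : Y, g (y : X) = e y) (hgn : ‖g‖ = 1) :
    g ∈ Set.extremePoints ℝ (closedBall (0 : StrongDual ℝ X) 1) := by
  have hne : e ≠ 0 := fun h => by simp [h, ContinuousLinearMap.opNorm_zero] at hnorm
  obtain ⟨w, hw, huniq⟩ := hU e hne
  have key : ∀ x : StrongDual ℝ X, (∀ y : Y, x (y : X) = e y) → ‖x‖ ≤ 1 → x = g := by
    intro x hx hxn
    have h1 : ‖x‖ = ‖e‖ := le_antisymm (hnorm ▸ hxn) (stmt17_norm_le hx)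
    rw [huniq x ⟨hx, h1⟩, ← huniq g ⟨hg, hgn.trans hnorm.symm⟩]
  refine ⟨(mem_closedBall_zero_iff (E := StrongDual ℝ X)).mpr hgn.le, ?_⟩
  rintro x₁ h₁ x₂ h₂ ⟨a, b, ha, hb, hab, hsum⟩
  have hseg : e ∈ openSegment ℝ (x₁.comp Y.subtypeL) (x₂.comp Y.subtypeL) := by
    refine ⟨a, b, ha, hb, hab, ?_⟩
    ext y
    have h5 := congrArg (fun z : StrongDual ℝ X => z (y : X)) hsum
    rw [hg y] at h5
    simpa using h5
  have hb1 : x₁.comp Y.subtypeL ∈ closedBall (0 : StrongDual ℝ Y) 1 :=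
    (mem_closedBall_zero_iff (E := StrongDual ℝ Y)).mpr
      ((stmt17_norm_le (f := x₁.comp Y.subtypeL) fun y => rfl).trans
        ((mem_closedBall_zero_iff (E := StrongDual ℝ X)).mp h₁))
  have hb2 : x₂.comp Y.subtypeL ∈ closedBall (0 : StrongDual ℝ Y) 1 :=
    (mem_closedBall_zero_iff (E := StrongDual ℝ Y)).mpr
      ((stmt17_norm_le (f := x₂.comp Y.subtypeL) fun y => rfl).trans
        ((mem_closedBall_zero_iff (E := StrongDual ℝ X)).mp h₂))
  obtain hr₁ := he.2 hb1 hb2 hseg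
  · refine key x₁ (fun y => ?_) ((mem_closedBall_zero_iff (E := StrongDual ℝ X)).mp h₁)
    exact congrArg (fun z : StrongDual ℝ Y => z y) hr₁

/-- If the (unique) norm-preserving extension of a norm-one functional `f` on `Y` is an extreme
point of the ball of `X*`, then `f` is an extreme point of the ball of `Y*`. -/
lemma stmt17_restr_extreme
    (hU : ∀ y' : StrongDual ℝ Y, y' ≠ 0 →
      ∃! x' : StrongDual ℝ X, (∀ y : Y, x' (y : X) = y' y) ∧ ‖x'‖ = ‖y'‖)
    {f : StrongDual ℝ Y} (hnorm : ‖f‖ = 1) {g : StrongDual ℝ X}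
    (hg : ∀ y : Y, g (y : X) = f y) (hgball : ‖g‖ ≤ 1)
    (hgext : g ∈ Set.extremePoints ℝ (closedBall (0 : StrongDual ℝ X) 1)) :
    f ∈ Set.extremePoints ℝ (closedBall (0 : StrongDual ℝ Y) 1) := by
  have hne : f ≠ 0 := fun h => by simp [h, ContinuousLinearMap.opNorm_zero] at hnorm
  have hgn : ‖g‖ = 1 := le_antisymm hgball (hnorm ▸ stmt17_norm_le hg)
  obtain ⟨w, hw, huniq⟩ := hU f hne
  have key : ∀ x : StrongDual ℝ X, (∀ y : Y, x (y : X) = f y) → ‖x‖ ≤ 1 → x = g := by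
    intro x hx hxn
    have h1 : ‖x‖ = ‖f‖ := le_antisymm (hnorm ▸ hxn) (stmt17_norm_le hx)
    rw [huniq x ⟨hx, h1⟩, ← huniq g ⟨hg, hgn.trans hnorm.symm⟩]
  refine ⟨(mem_closedBall_zero_iff (E := StrongDual ℝ Y)).mpr hnorm.le, ?_⟩
  rintro p hp q hq ⟨s, t, hs, ht, hst, hsum⟩
  obtain ⟨P, hP, hPn⟩ := exists_extension_norm_eq Y p
  obtain ⟨Q, hQ, hQn⟩ := exists_extension_norm_eq Y q
  have hP1 : ‖P‖ ≤ 1 := hPn.le.trans ((mem_closedBall_zero_iff (E := StrongDual ℝ Y)).mp hp)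
  have hQ1 : ‖Q‖ ≤ 1 := hQn.le.trans ((mem_closedBall_zero_iff (E := StrongDual ℝ Y)).mp hq)
  have hh : ∀ y : Y, (s • P + t • Q) (y : X) = f y := by
    intro y
    have h5 := congrArg (fun z : StrongDual ℝ Y => z y) hsum
    simpa [hP y, hQ y] using h5
  have hhn : ‖s • P + t • Q‖ ≤ 1 := by
    calc ‖s • P + t • Q‖ ≤ ‖s • P‖ + ‖t • Q‖ := norm_add_le _ _
      _ = s * ‖P‖ + t * ‖Q‖ := by
          rw [norm_smul, norm_smul, Real.norm_of_nonneg hs.le, Real.norm_of_nonneg ht.le]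
      _ ≤ s * 1 + t * 1 :=
          add_le_add (mul_le_mul_of_nonneg_left hP1 hs.le)
            (mul_le_mul_of_nonneg_left hQ1 ht.le)
      _ = 1 := by rw [mul_one, mul_one, hst]
  have hhg : s • P + t • Q = g := key _ hh hhn
  have hgseg : g ∈ openSegment ℝ P Q := ⟨s, t, hs, ht, hst, hhg⟩
  obtain hP' := hgext.2 ((mem_closedBall_zero_iff (E := StrongDual ℝ X)).mpr hP1)
    ((mem_closedBall_zero_iff (E := StrongDual ℝ X)).mpr hQ1) hgseg
  · ext y; rw [← hP y, hP', hg y]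

end Aux

/-- If the extreme points of the unit ball of `X*` form a weak*-closed set, `Y` is a closed
`U`-subspace of `X`, and the weak*-closure of the extreme points of the unit ball of `Y*` is
contained in the unit sphere of `Y*`, then the set of extreme points of the closed unit ball
of `Y*` is weak*-compact. -/
theorem stmt_17 (X : Type*) [NormedAddCommGroup X] [NormedSpace ℝ X] [CompleteSpace X]
    (hXext : IsClosed
      (StrongDual.toWeakDual '' Set.extremePoints ℝ (Metric.closedBall (0 : StrongDual ℝ X) 1) :
        Set (WeakDual ℝ X)))
    (Y : Submodule ℝ X) (hYclosed : IsClosed (Y : Set X))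
    (hU : ∀ y' : StrongDual ℝ Y, y' ≠ 0 →
      ∃! x' : StrongDual ℝ X, (∀ y : Y, x' (y : X) = y' y) ∧ ‖x'‖ = ‖y'‖)
    (hsphere : closure
        (StrongDual.toWeakDual '' Set.extremePoints ℝ (Metric.closedBall (0 : StrongDual ℝ Y) 1) :
          Set (WeakDual ℝ Y)) ⊆
      {f : WeakDual ℝ Y | ‖StrongDual.toWeakDual.symm f‖ = 1}) :
    IsCompact
      (StrongDual.toWeakDual '' Set.extremePoints ℝ (Metric.closedBall (0 : StrongDual ℝ Y) 1) :
        Set (WeakDual ℝ Y)) := by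
  classical
  set S : Set (StrongDual ℝ Y) := Set.extremePoints ℝ (closedBall (0 : StrongDual ℝ Y) 1) with hS
  set SW : Set (WeakDual ℝ Y) := StrongDual.toWeakDual '' S with hSW
  have hSnorm : ∀ e ∈ S, ‖e‖ = 1 := by
    intro e he
    have h := hsphere (subset_closure (Set.mem_image_of_mem _ he))
    simpa using h
  have hext : ∀ e ∈ S, ∃ g : StrongDual ℝ X,
      (∀ y : Y, g (y : X) = e y) ∧ ‖g‖ = 1 ∧
        g ∈ Set.extremePoints ℝ (closedBall (0 : StrongDual ℝ X) 1) := by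
    intro e he
    have hne : e ≠ 0 := fun h => by have := hSnorm e he; simp [h, ContinuousLinearMap.opNorm_zero] at this
    obtain ⟨g, ⟨hg, hgn⟩, -⟩ := hU e hne
    have hgn1 : ‖g‖ = 1 := hgn.trans (hSnorm e he)
    exact ⟨g, hg, hgn1, stmt17_ext_extreme hU he (hSnorm e he) hg hgn1⟩
  choose! E hE1 hE2 hE3 using hext
  set EW : WeakDual ℝ Y → WeakDual ℝ X :=
    fun s => StrongDual.toWeakDual (E (StrongDual.toWeakDual.symm s)) with hEW
  set R : WeakDual ℝ X → WeakDual ℝ Y := stmt17Restrict Y with hR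
  have hclosed : IsClosed SW := by
    refine isClosed_of_closure_subset fun f hf => ?_
    have hfn : ‖StrongDual.toWeakDual.symm f‖ = 1 := hsphere hf
    have hFne : (𝓝 f ⊓ 𝓟 SW).NeBot := mem_closure_iff_clusterPt.mp hf
    set F := 𝓝 f ⊓ 𝓟 SW with hF
    have hSWF : SW ∈ F := mem_inf_of_right (mem_principal_self _)
    set L := Filter.map EW F with hL
    have hLne : L.NeBot := hFne.map _
    have hKL : (WeakDual.toStrongDual ⁻¹' closedBall (0 : StrongDual ℝ X) 1) ∈ L := by
      rw [hL, Filter.mem_map]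
      filter_upwards [hSWF] with s hs
      obtain ⟨e, he, rfl⟩ := hs
      simp only [Set.mem_preimage, hEW, LinearEquiv.symm_apply_apply,
        stmt17_toNormedDual_toWeakDual]
      exact (mem_closedBall_zero_iff (E := StrongDual ℝ X)).mpr (hE2 e he).le
    obtain ⟨g, hgK, hgcl⟩ :=
      (WeakDual.isCompact_closedBall (0 : StrongDual ℝ X) 1).exists_clusterPt
        (le_principal_iff.mpr hKL)
    have hSX :
        (StrongDual.toWeakDual '' Set.extremePoints ℝ (closedBall (0 : StrongDual ℝ X) 1) :
          Set (WeakDual ℝ X)) ∈ L := by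
      rw [hL, Filter.mem_map]
      filter_upwards [hSWF] with s hs
      obtain ⟨e, he, rfl⟩ := hs
      refine ⟨E e, hE3 e he, ?_⟩
      simp only [hEW, LinearEquiv.symm_apply_apply]
    have hgmem : g ∈ StrongDual.toWeakDual '' Set.extremePoints ℝ (closedBall (0 : StrongDual ℝ X) 1) := by
      rw [← hXext.closure_eq]
      exact mem_closure_iff_clusterPt.mpr (hgcl.mono (le_principal_iff.mpr hSX))
    have hRg : R g = f := by
      have h1 : ClusterPt (R g) (Filter.map R L) :=
        hgcl.map (stmt17Restrict_continuous Y).continuousAt Filter.tendsto_map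
      have h2 : Filter.map R L = F := by
        rw [hL, Filter.map_map]
        have hcong : R ∘ EW =ᶠ[F] id := by
          filter_upwards [hSWF] with s hs
          obtain ⟨e, he, rfl⟩ := hs
          show R (EW (StrongDual.toWeakDual e)) = StrongDual.toWeakDual e
          simp only [hEW, hR, stmt17Restrict, LinearEquiv.symm_apply_apply]
          congr 1
          ext y
          exact hE1 e he y
        rw [Filter.map_congr hcong, Filter.map_id]
      rw [h2] at h1
      exact eq_of_nhds_neBot (h1.mono inf_le_left)
    obtain ⟨g₀, hg₀ext, rfl⟩ := hgmem
    have hg₀f : ∀ y : Y, g₀ (y : X) = (StrongDual.toWeakDual.symm f) y := by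
      intro y
      have h3 := congrArg (fun z : WeakDual ℝ Y => z y) hRg
      simpa [hR, stmt17Restrict] using h3
    have hg₀n : ‖g₀‖ ≤ 1 := (mem_closedBall_zero_iff (E := StrongDual ℝ X)).mp hg₀ext.1
    have hf₀ : StrongDual.toWeakDual.symm f ∈ S :=
      stmt17_restr_extreme hU hfn hg₀f hg₀n hg₀ext
    exact ⟨StrongDual.toWeakDual.symm f, hf₀, by simp⟩
  refine (WeakDual.isCompact_closedBall (0 : StrongDual ℝ Y) 1).of_isClosed_subset hclosed ?_
  rintro s ⟨e, he, rfl⟩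
  simp only [Set.mem_preimage, stmt17_toNormedDual_toWeakDual]
  exact (mem_closedBall_zero_iff (E := StrongDual ℝ Y)).mpr (hSnorm e he).le
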